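/- Let 𝒳, 𝒜, 𝒴, 𝒴' be finite sets, and let (X_1,A_1,Y_1),…,(X_n,A_n,Y_n) be i.i.d. from a joint probability mass function on 𝒳 × 𝒜 × 𝒴 whose (A,Y)-marginal is strictly positive; let q(y|a) = P(Y_1 = y | A_1 = a). Let f : 𝒳 → 𝒴', Ŷ_i = f(X_i), let Π be a random permutation whose conditional distribution given (A,Y) (and independent of X given (A,Y)) is the ICP distribution with density q, and set Ã = A_Π. If the joint distribution of the n-tuples (Ŷ, A, Y) equals that of (Ŷ, Ã, Y), then Ŷ and A are conditionally independent given (Y, S(A)): for all ŷ ∈ (𝒴')ⁿ, a ∈ 𝒜ⁿ, y ∈ 𝒴ⁿ with P(Y = y, S(A) = S(a)) > 0, P(Ŷ = ŷ, A = a | Y = y, S(A) = S(a)) = P(Ŷ = ŷ | Y = y, S(A) = S(a)) · P(A = a | Y = y, S(A) = S(a)). -/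

import Mathlib

/-- Probability of an event under a probability mass function `p` on a finite sample space. -/
noncomputable def Pr {Ω : Type*} [Fintype Ω] (p : Ω → ℝ) (E : Set Ω) : ℝ :=
  ∑ ω, E.indicator p ω

/-- The unordered multiset of values of a vector. -/
def multisetOf {α : Type*} {n : ℕ} (v : Fin n → α) : Multiset α :=
  Multiset.map v Finset.univ.val

/-- The ICP (inverse conditional permutation) probability of a permutation `π`, for the
conditional density `q` of `Y` given `A`. -/
noncomputable def ICPweight {𝒜 𝒴 : Type*} {n : ℕ} (q : 𝒴 → 𝒜 → ℝ)
    (a : Fin n → 𝒜) (y : Fin n → 𝒴) (π : Equiv.Perm (Fin n)) : ℝ :=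
  (∏ i, q (y (π⁻¹ i)) (a i)) / ∑ π' : Equiv.Perm (Fin n), ∏ i, q (y (π'⁻¹ i)) (a i)

lemma Pr_congr {Ω : Type*} [Fintype Ω] {p : Ω → ℝ} {E F : Set Ω} (h : E = F) :
    Pr p E = Pr p F := by rw [h]

lemma Pr_empty {Ω : Type*} [Fintype Ω] (p : Ω → ℝ) : Pr p (∅ : Set Ω) = 0 := by
  simp [Pr]

lemma Pr_partition {Ω V : Type*} [Fintype Ω] [Fintype V] (p : Ω → ℝ) (g : Ω → V)
    (E : Set Ω) : Pr p E = ∑ v, Pr p {ω | g ω = v ∧ ω ∈ E} := by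
  classical
  simp only [Pr, Set.indicator_apply, Set.mem_setOf_eq]
  rw [Finset.sum_comm]
  refine Finset.sum_congr rfl fun ω _ => ?_
  rw [Finset.sum_eq_single (g ω)]
  · simp
  · intro v _ hv
    rw [if_neg]; tauto
  · simp

lemma multisetOf_eq_ofFn {α : Type*} {n : ℕ} (v : Fin n → α) :
    multisetOf v = ↑(List.ofFn v) := by
  simp [multisetOf, List.ofFn_eq_map, Fin.univ_def]

lemma multisetOf_comp {α : Type*} {n : ℕ} (v : Fin n → α) (σ : Equiv.Perm (Fin n)) :
    multisetOf (v ∘ σ) = multisetOf v := by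
  rw [multisetOf_eq_ofFn, multisetOf_eq_ofFn]
  exact Multiset.coe_eq_coe.mpr (σ.ofFn_comp_perm v)

lemma exists_comp_perm {α : Type*} [Fintype α] {n : ℕ} {a a' : Fin n → α}
    (h : multisetOf a' = multisetOf a) : ∃ σ : Equiv.Perm (Fin n), a ∘ σ = a' := by
  classical
  letI : LinearOrder α := LinearOrder.lift' (Fintype.equivFin α) (Fintype.equivFin α).injective
  have hperm : List.Perm (List.ofFn a) (List.ofFn a') := by
    rw [← Multiset.coe_eq_coe, ← multisetOf_eq_ofFn, ← multisetOf_eq_ofFn]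
    exact h.symm
  have h1 : a ∘ Tuple.sort a = a' ∘ Tuple.sort a' := by
    apply List.ofFn_injective
    refine List.Perm.eq_of_sortedLE (List.sortedLE_ofFn_iff.mpr (Tuple.monotone_sort a))
      (List.sortedLE_ofFn_iff.mpr (Tuple.monotone_sort a')) ?_
    exact ((Tuple.sort a).ofFn_comp_perm a).trans
      (hperm.trans ((Tuple.sort a').ofFn_comp_perm a').symm)
  refine ⟨(Tuple.sort a').symm.trans (Tuple.sort a), funext fun i => ?_⟩
  have := congrFun h1 ((Tuple.sort a').symm i)
  simpa using this

lemma ICP_const {𝒜 𝒴 : Type*} {n : ℕ} (q : 𝒴 → 𝒜 → ℝ) (a : Fin n → 𝒜) (y : Fin n → 𝒴)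
    (π : Equiv.Perm (Fin n)) :
    ICPweight q (a ∘ ⇑π⁻¹) y π
      = (∏ i, q (y i) (a i)) / ∑ σ : Equiv.Perm (Fin n), ∏ i, q (y (σ⁻¹ i)) (a i) := by
  unfold ICPweight
  congr 1
  · exact Equiv.prod_comp π⁻¹ (fun i => q (y i) (a i))
  · refine (Fintype.sum_equiv (Equiv.mulLeft π) _ _ fun σ => ?_).symm
    calc ∏ i, q (y (σ⁻¹ i)) (a i)
        = ∏ i, q (y (σ⁻¹ (π⁻¹ (π i)))) (a (π⁻¹ (π i))) := by simp
      _ = ∏ i, q (y (((Equiv.mulLeft π σ))⁻¹ i)) ((a ∘ ⇑π⁻¹) i) := by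
          rw [← Equiv.prod_comp π (fun i => q (y ((Equiv.mulLeft π σ)⁻¹ i)) ((a ∘ ⇑π⁻¹) i))]
          simp [Equiv.Perm.mul_apply, Function.comp, mul_inv_rev]

lemma count_filter {α : Type*} [Fintype α] [DecidableEq α] {n : ℕ} (a a' : Fin n → α) :
    ((Finset.univ.filter fun π : Equiv.Perm (Fin n) => a ∘ π = a').card : ℝ)
      = if multisetOf a' = multisetOf a
          then ((Finset.univ.filter fun π : Equiv.Perm (Fin n) => a ∘ π = a).card : ℝ)
          else 0 := by
  classical
  split_ifs with h
  · obtain ⟨τ, hτ⟩ := exists_comp_perm h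
    norm_cast
    refine Finset.card_bij (fun π _ => π * τ⁻¹) ?_ ?_ ?_
    · intro π hπ
      simp only [Finset.mem_filter, Finset.mem_univ, true_and] at hπ ⊢
      funext i
      have h1 := congrFun hπ (τ⁻¹ i)
      have h2 := congrFun hτ (τ⁻¹ i)
      simp only [Function.comp_apply] at h1 h2
      simp only [Function.comp_apply, Equiv.Perm.mul_apply]
      rw [h1, ← h2, ← Equiv.Perm.mul_apply, mul_inv_cancel, Equiv.Perm.one_apply]
    · intro π₁ h₁ π₂ h₂ h12
      exact mul_right_cancel h12
    · intro σ hσ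
      simp only [Finset.mem_filter, Finset.mem_univ, true_and] at hσ
      refine ⟨σ * τ, ?_, by group⟩
      simp only [Finset.mem_filter, Finset.mem_univ, true_and]
      funext i
      have h1 := congrFun hσ (τ i)
      have h2 := congrFun hτ i
      simp only [Function.comp_apply] at h1 h2 ⊢
      simp [Equiv.Perm.mul_apply, h1, h2]
  · norm_cast
    simp only [Finset.card_eq_zero, Finset.filter_eq_empty_iff, Finset.mem_univ]
    intro π _ hc
    exact h (hc ▸ (multisetOf_comp a π))

lemma sum_perm_eq {α : Type*} [Fintype α] [DecidableEq α] {n : ℕ} (a : Fin n → α)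
    (F : (Fin n → α) → ℝ) :
    ∑ π : Equiv.Perm (Fin n), F (a ∘ π)
      = ((Finset.univ.filter fun π : Equiv.Perm (Fin n) => a ∘ π = a).card : ℝ)
        * ∑ a' : Fin n → α, (if multisetOf a' = multisetOf a then F a' else 0) := by
  classical
  rw [← Finset.sum_fiberwise_of_maps_to (g := fun π : Equiv.Perm (Fin n) => a ∘ π)
    (fun π _ => Finset.mem_univ _) (fun π => F (a ∘ π))]
  rw [Finset.mul_sum]
  refine Finset.sum_congr rfl fun a' _ => ?_
  have h1 : ∑ π ∈ Finset.univ.filter (fun π : Equiv.Perm (Fin n) => a ∘ π = a'),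
      F (a ∘ π) = ((Finset.univ.filter fun π : Equiv.Perm (Fin n) => a ∘ π = a').card : ℝ)
        * F a' := by
    rw [Finset.sum_congr rfl (fun π hπ => by
      rw [(Finset.mem_filter.mp hπ).2]), Finset.sum_const, nsmul_eq_mul]
  rw [h1, count_filter a a']
  split_ifs with h
  · rfl
  · ring

/-- Theorem 2.1, first claim of part (2): in the i.i.d. + ICP setting, if the
joint law of the n-tuples `(Ŷ, A, Y)` equals that of `(Ŷ, Ã, Y)` (where `Ã = A_Π`), then
`Ŷ` and `A` are conditionally independent given `(Y, S(A))`: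
`P(Ŷ = yh, A = a | Y = y, S(A) = S(a))`
`= P(Ŷ = yh | Y = y, S(A) = S(a)) · P(A = a | Y = y, S(A) = S(a))`. -/
theorem stmt_5 {Ω 𝒳 𝒜 𝒴 𝒴' : Type*} [Fintype Ω] [Fintype 𝒳] [Fintype 𝒜] [Fintype 𝒴']
    [Fintype 𝒴]
    (p : Ω → ℝ) (hp0 : ∀ ω, 0 ≤ p ω) (hp1 : ∑ ω, p ω = 1)
    (j : 𝒳 → 𝒜 → 𝒴 → ℝ) (hj0 : ∀ x b y0, 0 ≤ j x b y0)
    (hj1 : ∑ x, ∑ b, ∑ y0, j x b y0 = 1)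
    (hmarg : ∀ b y0, 0 < ∑ x, j x b y0)
    {n : ℕ} (hn : 1 ≤ n)
    (X : Ω → Fin n → 𝒳) (A : Ω → Fin n → 𝒜) (Y : Ω → Fin n → 𝒴)
    (Prm : Ω → Equiv.Perm (Fin n)) (f : 𝒳 → 𝒴')
    (q : 𝒴 → 𝒜 → ℝ) (hq : ∀ y0 b, q y0 b = (∑ x, j x b y0) / ∑ x, ∑ y', j x b y')
    (hiid : ∀ (x : Fin n → 𝒳) (a : Fin n → 𝒜) (y : Fin n → 𝒴),
      Pr p {ω | X ω = x ∧ A ω = a ∧ Y ω = y} = ∏ i, j (x i) (a i) (y i))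
    (hPrm : ∀ (x : Fin n → 𝒳) (a : Fin n → 𝒜) (y : Fin n → 𝒴) (π : Equiv.Perm (Fin n)),
      Pr p {ω | Prm ω = π ∧ X ω = x ∧ A ω = a ∧ Y ω = y}
        = ICPweight q a y π * Pr p {ω | X ω = x ∧ A ω = a ∧ Y ω = y})
    (hdist : ∀ (yh : Fin n → 𝒴') (a : Fin n → 𝒜) (y : Fin n → 𝒴),
      Pr p {ω | (fun i => f (X ω i)) = yh ∧ A ω = a ∧ Y ω = y}
        = Pr p {ω | (fun i => f (X ω i)) = yh ∧ (fun i => A ω (Prm ω i)) = a ∧ Y ω = y})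
    (yh : Fin n → 𝒴') (a : Fin n → 𝒜) (y : Fin n → 𝒴)
    (hpos : 0 < Pr p {ω | Y ω = y ∧ multisetOf (A ω) = multisetOf a}) :
    Pr p {ω | (fun i => f (X ω i)) = yh ∧ A ω = a ∧ Y ω = y ∧
          multisetOf (A ω) = multisetOf a} /
        Pr p {ω | Y ω = y ∧ multisetOf (A ω) = multisetOf a}
      = (Pr p {ω | (fun i => f (X ω i)) = yh ∧ Y ω = y ∧
            multisetOf (A ω) = multisetOf a} /
          Pr p {ω | Y ω = y ∧ multisetOf (A ω) = multisetOf a})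
        * (Pr p {ω | A ω = a ∧ Y ω = y ∧ multisetOf (A ω) = multisetOf a} /
          Pr p {ω | Y ω = y ∧ multisetOf (A ω) = multisetOf a}) := by
  classical
  set c : ℝ := (∏ i, q (y i) (a i)) /
      ∑ σ : Equiv.Perm (Fin n), ∏ i, q (y (σ⁻¹ i)) (a i) with hc
  set K : ℝ :=
      ((Finset.univ.filter fun π : Equiv.Perm (Fin n) => a ∘ π = a).card : ℝ) with hK
  set F : (Fin n → 𝒴') → (Fin n → 𝒜) → ℝ := fun yh' a' =>
      Pr p {ω | (fun i => f (X ω i)) = yh' ∧ A ω = a' ∧ Y ω = y} with hF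
  set G : (Fin n → 𝒴') → ℝ := fun yh' =>
      ∑ a' : Fin n → 𝒜, (if multisetOf a' = multisetOf a then F yh' a' else 0) with hG
  set T : ℝ := Pr p {ω | Y ω = y ∧ multisetOf (A ω) = multisetOf a} with hT
  -- Step 2: conditional independence of Prm and Yh given (A, Y)
  have step2 : ∀ (yh' : Fin n → 𝒴') (π : Equiv.Perm (Fin n)) (a'' : Fin n → 𝒜),
      Pr p {ω | Prm ω = π ∧ (fun i => f (X ω i)) = yh' ∧ A ω = a'' ∧ Y ω = y}
        = ICPweight q a'' y π * F yh' a'' := by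
    intro yh' π a''
    simp only [hF]
    rw [Pr_partition p X {ω | Prm ω = π ∧ (fun i => f (X ω i)) = yh' ∧ A ω = a'' ∧ Y ω = y},
      Pr_partition p X {ω | (fun i => f (X ω i)) = yh' ∧ A ω = a'' ∧ Y ω = y},
      Finset.mul_sum]
    refine Finset.sum_congr rfl fun x _ => ?_
    by_cases hx : (fun i => f (x i)) = yh'
    · have e1 : {ω | X ω = x ∧ ω ∈ {ω | Prm ω = π ∧ (fun i => f (X ω i)) = yh'
            ∧ A ω = a'' ∧ Y ω = y}}
          = {ω | Prm ω = π ∧ X ω = x ∧ A ω = a'' ∧ Y ω = y} := by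
        ext ω
        simp only [Set.mem_setOf_eq]
        constructor
        · rintro ⟨h1, h2, _, h4, h5⟩
          exact ⟨h2, h1, h4, h5⟩
        · rintro ⟨h1, h2, h3, h4⟩
          subst h2
          exact ⟨rfl, h1, hx, h3, h4⟩
      have e2 : {ω | X ω = x ∧ ω ∈ {ω | (fun i => f (X ω i)) = yh'
            ∧ A ω = a'' ∧ Y ω = y}}
          = {ω | X ω = x ∧ A ω = a'' ∧ Y ω = y} := by
        ext ω
        simp only [Set.mem_setOf_eq]
        constructor
        · rintro ⟨h1, _, h3, h4⟩
          exact ⟨h1, h3, h4⟩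
        · rintro ⟨h1, h3, h4⟩
          subst h1
          exact ⟨rfl, hx, h3, h4⟩
      rw [Pr_congr e1, Pr_congr e2, hPrm]
    · have e1 : {ω | X ω = x ∧ ω ∈ {ω | Prm ω = π ∧ (fun i => f (X ω i)) = yh'
            ∧ A ω = a'' ∧ Y ω = y}} = (∅ : Set Ω) := by
        ext ω
        simp only [Set.mem_setOf_eq, Set.mem_empty_iff_false, iff_false]
        rintro ⟨h1, _, h3, _⟩
        simp only [h1] at h3
        exact hx h3
      have e2 : {ω | X ω = x ∧ ω ∈ {ω | (fun i => f (X ω i)) = yh'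
            ∧ A ω = a'' ∧ Y ω = y}} = (∅ : Set Ω) := by
        ext ω
        simp only [Set.mem_setOf_eq, Set.mem_empty_iff_false, iff_false]
        rintro ⟨h1, h3, _⟩
        simp only [h1] at h3
        exact hx h3
      rw [Pr_congr e1, Pr_congr e2, Pr_empty, mul_zero]
  -- key identity: L yh' = c * (K * G yh')
  have keyL : ∀ yh' : Fin n → 𝒴', F yh' a = c * (K * G yh') := by
    intro yh'
    have h0 : F yh' a
        = Pr p {ω | (fun i => f (X ω i)) = yh' ∧ (fun i => A ω (Prm ω i)) = a ∧ Y ω = y} :=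
      hdist yh' a y
    rw [h0, Pr_partition p Prm]
    have h1 : ∀ π : Equiv.Perm (Fin n),
        Pr p {ω | Prm ω = π ∧ ω ∈ {ω | (fun i => f (X ω i)) = yh'
            ∧ (fun i => A ω (Prm ω i)) = a ∧ Y ω = y}}
          = c * F yh' (a ∘ ⇑π⁻¹) := by
      intro π
      have e1 : {ω | Prm ω = π ∧ ω ∈ {ω | (fun i => f (X ω i)) = yh'
            ∧ (fun i => A ω (Prm ω i)) = a ∧ Y ω = y}}
          = {ω | Prm ω = π ∧ (fun i => f (X ω i)) = yh' ∧ A ω = a ∘ ⇑π⁻¹ ∧ Y ω = y} := by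
        ext ω
        simp only [Set.mem_setOf_eq]
        constructor
        · rintro ⟨h1, h2, h3, h4⟩
          simp only [h1] at h3
          refine ⟨h1, h2, funext fun i => ?_, h4⟩
          have := congrFun h3 (π⁻¹ i)
          simpa using this
        · rintro ⟨h1, h2, h3, h4⟩
          refine ⟨h1, h2, funext fun i => ?_, h4⟩
          simp only [h1, h3, Function.comp_apply]
          simp
      rw [Pr_congr e1, step2 yh' π (a ∘ ⇑π⁻¹), ICP_const, ← hc]
    rw [Finset.sum_congr rfl fun π _ => h1 π, ← Finset.mul_sum]
    congr 1
    have h2 : ∑ π : Equiv.Perm (Fin n), F yh' (a ∘ ⇑π⁻¹)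
        = ∑ π : Equiv.Perm (Fin n), F yh' (a ∘ ⇑π) :=
      Equiv.sum_comp (Equiv.inv (Equiv.Perm (Fin n))) (fun π => F yh' (a ∘ ⇑π))
    rw [h2, sum_perm_eq a (F yh'), ← hK]
  -- G yh' is the probability with the multiset condition
  have keyG : ∀ yh' : Fin n → 𝒴',
      Pr p {ω | (fun i => f (X ω i)) = yh' ∧ Y ω = y ∧ multisetOf (A ω) = multisetOf a}
        = G yh' := by
    intro yh'
    rw [Pr_partition p A]
    simp only [hG]
    refine Finset.sum_congr rfl fun a' _ => ?_
    by_cases h : multisetOf a' = multisetOf a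
    · rw [if_pos h]
      simp only [hF]
      refine Pr_congr ?_
      ext ω
      simp only [Set.mem_setOf_eq]
      constructor
      · rintro ⟨h1, h2, h3, _⟩
        exact ⟨h2, h1, h3⟩
      · rintro ⟨h1, h2, h3⟩
        subst h2
        exact ⟨rfl, h1, h3, h⟩
    · rw [if_neg h]
      have e : {ω | A ω = a' ∧ ω ∈ {ω | (fun i => f (X ω i)) = yh' ∧ Y ω = y
            ∧ multisetOf (A ω) = multisetOf a}} = (∅ : Set Ω) := by
        ext ω
        simp only [Set.mem_setOf_eq, Set.mem_empty_iff_false, iff_false]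
        rintro ⟨h1, _, _, h4⟩
        rw [h1] at h4
        exact h h4
      rw [Pr_congr e, Pr_empty]
  -- T as a sum
  have keyT : T = ∑ a' : Fin n → 𝒜,
      (if multisetOf a' = multisetOf a then Pr p {ω | A ω = a' ∧ Y ω = y} else 0) := by
    rw [hT, Pr_partition p A]
    refine Finset.sum_congr rfl fun a' _ => ?_
    by_cases h : multisetOf a' = multisetOf a
    · rw [if_pos h]
      refine Pr_congr ?_
      ext ω
      simp only [Set.mem_setOf_eq]
      constructor
      · rintro ⟨h1, h2, _⟩
        exact ⟨h1, h2⟩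
      · rintro ⟨h1, h2⟩
        subst h1
        exact ⟨rfl, h2, h⟩
    · rw [if_neg h]
      have e : {ω | A ω = a' ∧ ω ∈ {ω | Y ω = y ∧ multisetOf (A ω) = multisetOf a}}
          = (∅ : Set Ω) := by
        ext ω
        simp only [Set.mem_setOf_eq, Set.mem_empty_iff_false, iff_false]
        rintro ⟨h1, _, h3⟩
        rw [h1] at h3
        exact h h3
      rw [Pr_congr e, Pr_empty]
  -- marginalizing F over yh'
  have sumF : ∀ a' : Fin n → 𝒜,
      ∑ yh' : Fin n → 𝒴', F yh' a' = Pr p {ω | A ω = a' ∧ Y ω = y} := by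
    intro a'
    rw [Pr_partition p (fun ω => (fun i => f (X ω i)))
      {ω | A ω = a' ∧ Y ω = y}]
    refine Finset.sum_congr rfl fun yh' _ => ?_
    simp only [hF]
    refine Pr_congr ?_
    ext ω
    simp only [Set.mem_setOf_eq]
  -- sum of G
  have hswap : ∑ yh' : Fin n → 𝒴', G yh' = T := by
    simp only [hG]
    rw [keyT, Finset.sum_comm]
    refine Finset.sum_congr rfl fun a' _ => ?_
    rw [← sumF a']
    split_ifs with h
    · rfl
    · exact Finset.sum_const_zero
  -- H = c * K * T
  have keyH : Pr p {ω | A ω = a ∧ Y ω = y} = c * (K * T) := by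
    have h1 : Pr p {ω | A ω = a ∧ Y ω = y} = ∑ yh' : Fin n → 𝒴', F yh' a := by
      rw [Pr_partition p (fun ω => (fun i => f (X ω i))) {ω | A ω = a ∧ Y ω = y}]
      refine Finset.sum_congr rfl fun yh' _ => ?_
      simp only [hF]
      refine Pr_congr ?_
      ext ω
      simp only [Set.mem_setOf_eq]
    rw [h1, Finset.sum_congr rfl fun yh' _ => keyL yh', ← Finset.mul_sum,
      ← Finset.mul_sum, hswap]
  -- conclusion
  have hT0 : T ≠ 0 := ne_of_gt hpos
  have g1 : Pr p {ω | (fun i => f (X ω i)) = yh ∧ A ω = a ∧ Y ω = y ∧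
      multisetOf (A ω) = multisetOf a} = F yh a := by
    simp only [hF]
    refine Pr_congr ?_
    ext ω
    simp only [Set.mem_setOf_eq]
    constructor
    · rintro ⟨h1, h2, h3, _⟩
      exact ⟨h1, h2, h3⟩
    · rintro ⟨h1, h2, h3⟩
      exact ⟨h1, h2, h3, by rw [h2]⟩
  have g2 : Pr p {ω | A ω = a ∧ Y ω = y ∧ multisetOf (A ω) = multisetOf a}
      = Pr p {ω | A ω = a ∧ Y ω = y} := by
    refine Pr_congr ?_
    ext ω
    simp only [Set.mem_setOf_eq]
    constructor
    · rintro ⟨h1, h2, _⟩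
      exact ⟨h1, h2⟩
    · rintro ⟨h1, h2⟩
      exact ⟨h1, h2, by rw [h1]⟩
  rw [g1, g2, keyH, keyL yh, keyG yh]
  field_simp
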